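/- Let δ be a power of a prime p and q = δ^m with m ≥ 2. The narrow-sense antiprimitive BCH code C_{(q, q+1, δ, 1)} = {c ∈ GF(q)^{U_{q+1}} : Σ_{u ∈ U_{q+1}} c_u u^i = 0 for all 1 ≤ |i| ≤ δ - 1} has minimum Hamming distance exactly δ + 1. -/

import Mathlib

open Polynomial Finset

lemma lag_sum {K : Type*} [Field K] {ι : Type*} (S : Finset ι) (ν d : ι → K) {n : ℕ}
    (h : ∀ k, k < n → ∑ u ∈ S, d u * ν u ^ k = 0)
    (g : Polynomial K) (hg : g.natDegree < n) :
    ∑ u ∈ S, d u * g.eval (ν u) = 0 := by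
  have he : ∀ u, g.eval (ν u) = ∑ k ∈ Finset.range n, g.coeff k * ν u ^ k :=
    fun u => g.eval_eq_sum_range' hg (ν u)
  calc ∑ u ∈ S, d u * g.eval (ν u)
      = ∑ u ∈ S, ∑ k ∈ Finset.range n, g.coeff k * (d u * ν u ^ k) := by
        refine Finset.sum_congr rfl fun u _ => ?_
        rw [he u, Finset.mul_sum]
        exact Finset.sum_congr rfl fun k _ => by ring
    _ = ∑ k ∈ Finset.range n, g.coeff k * ∑ u ∈ S, d u * ν u ^ k := by
        rw [Finset.sum_comm]
        exact Finset.sum_congr rfl fun k _ => by rw [Finset.mul_sum]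
    _ = 0 := Finset.sum_eq_zero fun k hk => by
        rw [h k (Finset.mem_range.mp hk), mul_zero]

lemma lag_zero {K : Type*} [Field K] {ι : Type*} [DecidableEq ι] {S : Finset ι} {ν d : ι → K} {n : ℕ}
    (hν : Set.InjOn ν S)
    (h : ∀ k, k < n → ∑ u ∈ S, d u * ν u ^ k = 0)
    (hcard : S.card ≤ n) {u : ι} (hu : u ∈ S) : d u = 0 := by
  classical
  set g : Polynomial K := ∏ v ∈ S.erase u, (X - C (ν v)) with hgdef
  have hdeg : g.natDegree < n := by
    have h1 : g.natDegree = (S.erase u).card := by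
      rw [hgdef, Polynomial.natDegree_prod _ _ (fun v _ => X_sub_C_ne_zero (ν v))]
      simp
    rw [h1, Finset.card_erase_of_mem hu]
    exact lt_of_lt_of_le (Nat.sub_lt (Finset.card_pos.mpr ⟨u, hu⟩) one_pos) hcard
  have hsum := lag_sum S ν d h g hdeg
  have hvanish : ∀ v ∈ S, v ≠ u → d v * g.eval (ν v) = 0 := by
    intro v hv hvu
    have : g.eval (ν v) = 0 := by
      rw [hgdef, Polynomial.eval_prod]
      exact Finset.prod_eq_zero (Finset.mem_erase.mpr ⟨hvu, hv⟩) (by simp)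
    rw [this, mul_zero]
  rw [Finset.sum_eq_single u hvanish (fun h' => absurd hu h')] at hsum
  have hne : g.eval (ν u) ≠ 0 := by
    rw [hgdef, Polynomial.eval_prod]
    refine Finset.prod_ne_zero_iff.mpr fun v hv => ?_
    simp only [eval_sub, eval_X, eval_C, sub_ne_zero]
    exact fun hEq => (Finset.mem_erase.mp hv).1 (hν (Finset.mem_erase.mp hv).2 hu hEq.symm)
  exact (mul_eq_zero.mp hsum).resolve_right hne

lemma lag_const {K : Type*} [Field K] {ι : Type*} [DecidableEq ι] {S : Finset ι} {ν d : ι → K} {n : ℕ}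
    (hν : Set.InjOn ν S)
    (h : ∀ k, k < n → ∑ u ∈ S, d u * ν u ^ k = 0)
    (hcard : S.card = n + 1) {u w : ι} (hu : u ∈ S) (hw : w ∈ S) :
    d u * ∏ v ∈ S.erase u, (ν u - ν v) = d w * ∏ v ∈ S.erase w, (ν w - ν v) := by
  classical
  rcases eq_or_ne u w with rfl | huw
  · rfl
  have hwu : w ∈ S.erase u := Finset.mem_erase.mpr ⟨Ne.symm huw, hw⟩
  have huw' : u ∈ S.erase w := Finset.mem_erase.mpr ⟨huw, hu⟩
  set E : Finset ι := (S.erase u).erase w with hE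
  have hn1 : 1 ≤ n := by
    by_contra hn
    interval_cases n
    · have : S.card ≤ 1 := le_of_eq hcard
      have := Finset.card_le_one.mp this u hu w hw
      exact huw this
  set g : Polynomial K := ∏ v ∈ E, (X - C (ν v)) with hgdef
  have hdeg : g.natDegree < n := by
    have h1 : g.natDegree = E.card := by
      rw [hgdef, Polynomial.natDegree_prod _ _ (fun v _ => X_sub_C_ne_zero (ν v))]
      simp
    have h2 : E.card = n - 1 := by
      rw [hE, Finset.card_erase_of_mem hwu, Finset.card_erase_of_mem hu, hcard]
      simp
    rw [h1, h2]
    omega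
  have hsum := lag_sum S ν d h g hdeg
  have hvanish : ∀ v ∈ E, d v * g.eval (ν v) = 0 := by
    intro v hv
    have : g.eval (ν v) = 0 := by
      rw [hgdef, Polynomial.eval_prod]
      exact Finset.prod_eq_zero hv (by simp)
    rw [this, mul_zero]
  rw [← Finset.add_sum_erase _ _ hu, ← Finset.add_sum_erase _ _ hwu,
    Finset.sum_eq_zero hvanish, add_zero] at hsum
  have hprodu : ∏ v ∈ S.erase u, (ν u - ν v) = (ν u - ν w) * ∏ v ∈ E, (ν u - ν v) := by
    rw [hE, ← Finset.mul_prod_erase _ _ hwu]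
  have hprodw : ∏ v ∈ S.erase w, (ν w - ν v) = (ν w - ν u) * ∏ v ∈ E, (ν w - ν v) := by
    rw [hE, Finset.erase_right_comm, ← Finset.mul_prod_erase _ _ huw']
  have hgu : g.eval (ν u) = ∏ v ∈ E, (ν u - ν v) := by
    rw [hgdef, Polynomial.eval_prod]; simp
  have hgw : g.eval (ν w) = ∏ v ∈ E, (ν w - ν v) := by
    rw [hgdef, Polynomial.eval_prod]; simp
  rw [hgu, hgw] at hsum
  rw [hprodu, hprodw]
  linear_combination (ν u - ν w) * hsum

lemma fix_pow_tower {K : Type*} [Monoid K] {x : K} {δ : ℕ} (h : x ^ δ = x) :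
    ∀ m : ℕ, x ^ (δ ^ m) = x := by
  intro m
  induction m with
  | zero => simpa using rfl
  | succ n ih => rw [pow_succ, pow_mul, ih, h]

lemma charP_of_card {K : Type*} [Field K] [Fintype K] {p n : ℕ} (hp : p.Prime)
    (hn : 0 < n) (h : Fintype.card K = p ^ n) : CharP K p := by
  have h0 : ((p : K)) ^ n = 0 := by
    have := FiniteField.cast_card_eq_zero K
    rw [h] at this
    push_cast at this
    exact this
  have hp0 : (p : K) = 0 := pow_eq_zero_iff hn.ne' |>.mp h0
  have hdvd : ringChar K ∣ p := (ringChar.spec K p).mp hp0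
  have hchar := ringChar.charP K
  rcases (Nat.Prime.eq_one_or_self_of_dvd hp _ hdvd) with h1 | h1
  · exact absurd h1 (CharP.ringChar_ne_one)
  · rwa [h1] at hchar

/-- Reindex a sum over the subtype of `n`-th roots of unity as a sum over `nthRootsFinset`. -/

lemma sum_U_eq {K : Type*} [Field K] [Fintype K] {n : ℕ} (hn : 0 < n)
    [instF : Fintype {x : K // x ^ n = 1}] (g : K → K) :
    ∑ u : {x : K // x ^ n = 1}, g ↑u = ∑ y ∈ Polynomial.nthRootsFinset n (1 : K), g y := by
  classical
  refine Finset.sum_nbij' (fun u => (u : K)) (fun y => if h : y ^ n = 1 then ⟨y, h⟩ else ⟨1, one_pow n⟩) ?_ ?_ ?_ ?_ ?_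
  · intro u _
    exact (Polynomial.mem_nthRootsFinset hn 1).mpr u.2
  · intro y _
    exact Finset.mem_univ _
  · intro u _
    simp [u.2]
  · intro y hy
    simp [(Polynomial.mem_nthRootsFinset hn 1).mp hy]
  · intro u _
    rfl

lemma exists_primitiveRoot_of_dvd (K : Type*) [Field K] [Fintype K] {n : ℕ} (hn : 0 < n)
    (h : n ∣ Fintype.card K - 1) : ∃ ζ : K, IsPrimitiveRoot ζ n := by
  classical
  obtain ⟨g, hg⟩ := IsCyclic.exists_ofOrder_eq_natCard (α := Kˣ)
  have hcard : Nat.card Kˣ = Fintype.card K - 1 := by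
    rw [Nat.card_eq_fintype_card, Fintype.card_units]
  obtain ⟨a, ha⟩ := h
  have hprim : IsPrimitiveRoot g (Fintype.card K - 1) := by
    have := IsPrimitiveRoot.orderOf g
    rwa [hg, hcard] at this
  have hmul : Fintype.card K - 1 = a * n := by rw [ha, mul_comm]
  have hpos : 0 < Fintype.card K - 1 := by
    have h2 : 1 < Fintype.card K := Fintype.one_lt_card
    omega
  have := hprim.pow hpos hmul
  exact ⟨((g ^ a : Kˣ) : K), IsPrimitiveRoot.coe_units_iff.mpr this⟩

/-- Sum of `j`-th powers over all `n`-th roots of unity vanishes when `n ∤ j`. -/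

lemma sum_pow_roots_eq_zero {K : Type*} [Field K] {n : ℕ} (hn : 0 < n) {ζ : K}
    (hζ : IsPrimitiveRoot ζ n) {j : ℕ} (hj : ¬ n ∣ j) :
    ∑ x ∈ Polynomial.nthRootsFinset n (1 : K), x ^ j = 0 := by
  classical
  have hζn : ζ ≠ 0 := hζ.ne_zero hn.ne'
  have key : ∑ x ∈ Polynomial.nthRootsFinset n (1 : K), x ^ j
      = ∑ x ∈ Polynomial.nthRootsFinset n (1 : K), (ζ * x) ^ j := by
    refine (Finset.sum_nbij' (fun x => ζ * x) (fun y => ζ⁻¹ * y) ?_ ?_ ?_ ?_ ?_).symm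
    · intro x hx
      rw [Polynomial.mem_nthRootsFinset hn 1] at hx ⊢
      rw [mul_pow, hζ.pow_eq_one, hx, one_mul]
    · intro y hy
      rw [Polynomial.mem_nthRootsFinset hn 1] at hy ⊢
      rw [mul_pow, inv_pow, hζ.pow_eq_one, hy, inv_one, one_mul]
    · intro x _; field_simp
    · intro y _; field_simp
    · intro x _; rfl
  have : (ζ ^ j - 1) * ∑ x ∈ Polynomial.nthRootsFinset n (1 : K), x ^ j = 0 := by
    rw [sub_mul, one_mul, Finset.mul_sum]
    rw [key]
    rw [sub_eq_zero]
    exact Finset.sum_congr rfl fun x _ => by rw [mul_pow]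
  rcases mul_eq_zero.mp this with h | h
  · exact absurd (sub_eq_zero.mp h) (fun hh => hj ((hζ.pow_eq_one_iff_dvd j).mp hh))
  · exact h

/-- Every Frobenius-fixed element of `K` is in the image of `algebraMap F K`. -/

lemma fixed_mem_range {F K : Type*} [Field F] [Fintype F] [Field K] [Fintype K] [Algebra F K]
    {q : ℕ} (hF : Fintype.card F = q) (hq : 2 ≤ q) {z : K} (hz : z ^ q = z) :
    ∃ a : F, algebraMap F K a = z := by
  classical
  set f : Polynomial K := X ^ q - X with hf
  have hdeg : f.natDegree = q := by
    rw [hf, Polynomial.natDegree_sub_eq_left_of_natDegree_lt (by simp; omega)]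
    simp
  have hfne : f ≠ 0 := by
    intro h0
    rw [h0] at hdeg
    simp at hdeg
    omega
  set A : Finset K := Finset.univ.image (algebraMap F K) with hA
  have hcardA : A.card = q := by
    rw [hA, Finset.card_image_of_injective _ (algebraMap F K).injective, Finset.card_univ, hF]
  have hroot : ∀ y ∈ A, f.IsRoot y := by
    intro y hy
    obtain ⟨a, _, rfl⟩ := Finset.mem_image.mp hy
    have : (algebraMap F K a) ^ q = algebraMap F K a := by
      rw [← map_pow, ← hF, FiniteField.pow_card]
    simp [hf, Polynomial.IsRoot, sub_eq_zero, this]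
  by_contra hcon
  push_neg at hcon
  have hzA : z ∉ A := by
    intro hz'
    obtain ⟨a, _, ha⟩ := Finset.mem_image.mp hz'
    exact hcon a ha
  have hrootz : f.IsRoot z := by simp [hf, Polynomial.IsRoot, sub_eq_zero, hz]
  have hsub : insert z A ⊆ f.roots.toFinset := by
    intro y hy
    rw [Multiset.mem_toFinset, Polynomial.mem_roots hfne]
    rcases Finset.mem_insert.mp hy with rfl | hy'
    · exact hrootz
    · exact hroot y hy'
  have h1 : (insert z A).card = q + 1 := by rw [Finset.card_insert_of_notMem hzA, hcardA]
  have h2 : f.roots.toFinset.card ≤ q := by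
    calc f.roots.toFinset.card ≤ Multiset.card f.roots := f.roots.toFinset_card_le
    _ ≤ f.natDegree := f.card_roots' 
    _ = q := hdeg
  have := Finset.card_le_card hsub
  omega

lemma sum_pow_T0 {K : Type*} [Field K] [DecidableEq K] {δ : ℕ} (hδ2 : 2 ≤ δ) (hδK : (δ : K) = 0)
    {ζ : K} (hζ : IsPrimitiveRoot ζ (δ - 1)) (j : ℕ) (hj : j ≤ δ - 1) :
    ∑ x ∈ insert (0 : K) (Polynomial.nthRootsFinset (δ - 1) (1 : K)), x ^ j
      = if j = δ - 1 then -1 else 0 := by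
  classical
  have hδ1 : 0 < δ - 1 := by omega
  have h0T : (0 : K) ∉ Polynomial.nthRootsFinset (δ - 1) (1 : K) := by
    intro h
    have := (Polynomial.mem_nthRootsFinset hδ1 1).mp h
    rw [zero_pow hδ1.ne'] at this
    exact one_ne_zero this.symm
  have hcardT : (Polynomial.nthRootsFinset (δ - 1) (1 : K)).card = δ - 1 := hζ.card_nthRootsFinset
  rcases Nat.eq_zero_or_pos j with rfl | hjpos
  · -- j = 0 : sum of ones = card = δ = 0
    have hne : (0 : ℕ) ≠ δ - 1 := by omega
    rw [if_neg hne]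
    simp only [pow_zero]
    rw [Finset.sum_const, Finset.card_insert_of_notMem h0T, hcardT]
    have : ((δ - 1 + 1 : ℕ) : K) = 0 := by
      rw [show δ - 1 + 1 = δ by omega]
      exact_mod_cast hδK
    simp [nsmul_eq_mul, this]
  · rw [Finset.sum_insert h0T, zero_pow hjpos.ne', zero_add]
    rcases eq_or_ne j (δ - 1) with rfl | hjne
    · rw [if_pos rfl]
      have : ∀ x ∈ Polynomial.nthRootsFinset (δ - 1) (1 : K), x ^ (δ - 1) = 1 := fun x hx =>
        (Polynomial.mem_nthRootsFinset hδ1 1).mp hx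
      rw [Finset.sum_congr rfl this, Finset.sum_const, hcardT, nsmul_eq_mul]
      have : ((δ - 1 : ℕ) : K) = -1 := by
        rw [Nat.cast_sub (by omega : 1 ≤ δ), hδK, Nat.cast_one, zero_sub]
      rw [this, mul_one]
    · rw [if_neg hjne]
      exact sum_pow_roots_eq_zero hδ1 hζ (fun hdvd => by
        have := Nat.le_of_dvd hjpos hdvd
        omega)

lemma zpow_neg_eq_pow_q {K : Type*} [Field K] {q : ℕ} {y : K} (hy : y ^ (q + 1) = 1) (j : ℕ) :
    y ^ (-(j : ℤ)) = (y ^ j) ^ q := by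
  have h1 : y ^ j * (y ^ j) ^ q = 1 := by
    rw [← pow_mul, ← pow_add]
    have e : j + j * q = (q + 1) * j := by ring
    rw [e, pow_mul, hy, one_pow]
  rw [zpow_neg, zpow_natCast]
  exact inv_eq_of_mul_eq_one_right h1

lemma lower_bound_core {K : Type*} [Field K] {q δ : ℕ} (hδ2 : 2 ≤ δ)
    (hcop : Nat.Coprime δ (q + 1))
    (S : Finset K) (hS0 : ∀ y ∈ S, y ^ (q + 1) = 1) (hne : S.Nonempty)
    (a : K → K) (ha : ∀ y ∈ S, a y ≠ 0)
    (hpos : ∀ k, k < δ - 1 → ∑ y ∈ S, (a y * y) * y ^ k = 0)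
    (hneg : ∀ k, k < δ - 1 → ∑ y ∈ S, (a y * y⁻¹) * (y⁻¹) ^ k = 0) :
    δ + 1 ≤ S.card := by
  classical
  by_contra hcon
  push_neg at hcon
  have hcard : S.card ≤ δ := by omega
  have hy0 : ∀ y ∈ S, (y : K) ≠ 0 := by
    intro y hy h0
    have := hS0 y hy
    rw [h0, zero_pow (Nat.succ_ne_zero q)] at this
    exact one_ne_zero this.symm
  have hinj1 : Set.InjOn (fun y : K => y) S := fun x _ y _ h => h
  have hinj2 : Set.InjOn (fun y : K => y⁻¹) S := fun x _ y _ h => inv_injective h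
  -- first: the support has exactly δ elements
  have hcardδ : S.card = δ := by
    by_contra hne'
    have hle : S.card ≤ δ - 1 := by omega
    obtain ⟨y, hy⟩ := hne
    have := lag_zero (ν := fun y : K => y) (d := fun y => a y * y) hinj1 hpos hle hy
    exact ha y hy (by
      rcases mul_eq_zero.mp this with h | h
      · exact h
      · exact absurd h (hy0 y hy))
  -- two distinct elements
  obtain ⟨y, hy, w, hw, hyw⟩ := Finset.one_lt_card.mp (by omega : 1 < S.card)
  have hΛ := lag_const (ν := fun y : K => y) (d := fun y => a y * y) hinj1 hpos
    (by omega : S.card = (δ - 1) + 1) hy hw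
  have hM := lag_const (ν := fun y : K => y⁻¹) (d := fun y => a y * y⁻¹) hinj2 hneg
    (by omega : S.card = (δ - 1) + 1) hy hw
  -- the key algebraic identity
  have hkey : ∀ u ∈ S, ((a u * u⁻¹) * ∏ v ∈ S.erase u, (u⁻¹ - v⁻¹)) * u ^ δ * (∏ v ∈ S, v)
      = (-1) ^ (δ - 1) * ((a u * u) * ∏ v ∈ S.erase u, (u - v)) := by
    intro u hu
    have hu0 : u ≠ 0 := hy0 u hu
    have hcardE : (S.erase u).card = δ - 1 := by
      rw [Finset.card_erase_of_mem hu, hcardδ]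
    have hP : ∏ v ∈ S, v = u * ∏ v ∈ S.erase u, v := (Finset.mul_prod_erase _ _ hu).symm
    have e1 : ∏ v ∈ S.erase u, ((u⁻¹ - v⁻¹) * (v * u)) = ∏ v ∈ S.erase u, (v - u) := by
      refine Finset.prod_congr rfl fun v hv => ?_
      have hv0 : v ≠ 0 := hy0 v (Finset.mem_of_mem_erase hv)
      have e : (u⁻¹ - v⁻¹) * (v * u) = v * (u * u⁻¹) - u * (v * v⁻¹) := by ring
      rw [e, mul_inv_cancel₀ hu0, mul_inv_cancel₀ hv0, mul_one, mul_one]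
    have e2 : ∏ v ∈ S.erase u, ((u⁻¹ - v⁻¹) * (v * u))
        = (∏ v ∈ S.erase u, (u⁻¹ - v⁻¹)) * (∏ v ∈ S.erase u, v) * u ^ (δ - 1) := by
      rw [Finset.prod_mul_distrib, Finset.prod_mul_distrib, Finset.prod_const, hcardE, mul_assoc]
    have e3 : ∏ v ∈ S.erase u, (v - u) = (-1) ^ (δ - 1) * ∏ v ∈ S.erase u, (u - v) := by
      rw [← hcardE, ← Finset.prod_const (-1 : K), ← Finset.prod_mul_distrib]
      exact Finset.prod_congr rfl fun v _ => by ring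
    have e4 : (∏ v ∈ S.erase u, (u⁻¹ - v⁻¹)) * (∏ v ∈ S.erase u, v) * u ^ (δ - 1)
        = (-1) ^ (δ - 1) * ∏ v ∈ S.erase u, (u - v) := by rw [← e2, e1, e3]
    have hpow : u ^ δ = u ^ (δ - 1) * u := by
      rw [← pow_succ]
      congr 1
      omega
    calc ((a u * u⁻¹) * ∏ v ∈ S.erase u, (u⁻¹ - v⁻¹)) * u ^ δ * (∏ v ∈ S, v)
        = (a u) * ((u⁻¹ * u) * u) *
            ((∏ v ∈ S.erase u, (u⁻¹ - v⁻¹)) * (∏ v ∈ S.erase u, v) * u ^ (δ - 1)) := by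
          rw [hP, hpow]; ring
      _ = (a u) * u * ((-1) ^ (δ - 1) * ∏ v ∈ S.erase u, (u - v)) := by
          rw [inv_mul_cancel₀ hu0, one_mul, e4]
      _ = (-1) ^ (δ - 1) * ((a u * u) * ∏ v ∈ S.erase u, (u - v)) := by ring
  -- conclude u^δ equal for the two elements
  have hkyy := hkey y hy
  have hkww := hkey w hw
  rw [hM] at hkyy
  rw [hΛ] at hkyy
  -- now hkyy and hkww have the same LHS-coefficient and same RHS
  have heq : ((a w * w⁻¹) * ∏ v ∈ S.erase w, (w⁻¹ - v⁻¹)) * y ^ δ * (∏ v ∈ S, v)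
      = ((a w * w⁻¹) * ∏ v ∈ S.erase w, (w⁻¹ - v⁻¹)) * w ^ δ * (∏ v ∈ S, v) := by
    rw [hkyy, hkww]
  have hΛw : (a w * w) * ∏ v ∈ S.erase w, (w - v) ≠ 0 := by
    refine mul_ne_zero (mul_ne_zero (ha w hw) (hy0 w hw)) ?_
    refine Finset.prod_ne_zero_iff.mpr fun v hv => sub_ne_zero.mpr ?_
    exact fun hvw => (Finset.mem_erase.mp hv).1 hvw.symm
  have hMw : ((a w * w⁻¹) * ∏ v ∈ S.erase w, (w⁻¹ - v⁻¹)) ≠ 0 := by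
    intro h0
    rw [h0, zero_mul, zero_mul] at hkww
    have : ((-1 : K)) ^ (δ - 1) ≠ 0 := pow_ne_zero _ (neg_ne_zero.mpr one_ne_zero)
    exact this (by
      rcases mul_eq_zero.mp hkww.symm with h | h
      · exact h
      · exact absurd h hΛw)
  have hPne : (∏ v ∈ S, v) ≠ 0 := Finset.prod_ne_zero_iff.mpr hy0
  have hyδwδ : y ^ δ = w ^ δ := by
    have h1 := mul_right_cancel₀ hPne heq
    rw [mul_comm _ (y ^ δ), mul_comm _ (w ^ δ)] at h1
    exact mul_right_cancel₀ hMw h1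
  -- finish: y = w via coprimality
  have hx : (y * w⁻¹) ^ δ = 1 := by
    rw [mul_pow, inv_pow, hyδwδ, mul_inv_cancel₀ (pow_ne_zero _ (hy0 w hw))]
  have hx2 : (y * w⁻¹) ^ (q + 1) = 1 := by
    rw [mul_pow, inv_pow, hS0 y hy, hS0 w hw, inv_one, mul_one]
  have hord : orderOf (y * w⁻¹) = 1 := by
    have d1 := orderOf_dvd_of_pow_eq_one hx
    have d2 := orderOf_dvd_of_pow_eq_one hx2
    have := Nat.dvd_gcd d1 d2
    rwa [Nat.Coprime.gcd_eq_one hcop, Nat.dvd_one] at this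
  have : y * w⁻¹ = 1 := orderOf_eq_one_iff.mp hord
  rw [← div_eq_mul_inv] at this
  exact hyw ((div_eq_one_iff_eq (hy0 w hw)).mp this)

/-- Membership in the narrow-sense antiprimitive BCH code `C_{(q, q+1, δ, 1)}`:
a vector `(c_u)_{u ∈ U_{q+1}}` over `GF(q)` satisfying `∑_u c_u u^i = 0` in `GF(q²)`
for all `i` with `1 ≤ |i| ≤ δ - 1`. -/
def IsBCHWord (q δ : ℕ) (F K : Type*) [Field F] [Field K] [Finite K] [Algebra F K]
    (c : {x : K // x ^ (q + 1) = 1} → F) : Prop :=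
  letI : Fintype {x : K // x ^ (q + 1) = 1} := Fintype.ofFinite _
  ∀ i : ℤ, 1 ≤ |i| → |i| ≤ (δ : ℤ) - 1 →
    ∑ u : {x : K // x ^ (q + 1) = 1}, algebraMap F K (c u) * (u : K) ^ i = 0

/-- The Hamming weight of a vector. -/
noncomputable def hWeight {ι F : Type*} [Zero F] (c : ι → F) : ℕ :=
  {u : ι | c u ≠ 0}.ncard


lemma isBCHWord_of_nthRoots {q δ p n : ℕ} (hp : p.Prime) (hq : q = p ^ n)
    {F K : Type*} [Field F] [Fintype F] [Field K] [Fintype K] [Algebra F K]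
    (hF : Fintype.card F = q) (hchar : CharP K p)
    (c : {x : K // x ^ (q + 1) = 1} → F) (cK : K → F)
    (hcKc : ∀ (y : K) (hy : y ^ (q + 1) = 1), cK y = c ⟨y, hy⟩)
    (h : ∀ i : ℕ, 1 ≤ i → i ≤ δ - 1 →
      ∑ y ∈ Polynomial.nthRootsFinset (q + 1) (1 : K), algebraMap F K (cK y) * y ^ i = 0) :
    IsBCHWord q δ F K c := by
  haveI := Fact.mk hp
  haveI := hchar
  letI instU : Fintype {x : K // x ^ (q + 1) = 1} := Fintype.ofFinite _
  show ∀ i : ℤ, 1 ≤ |i| → |i| ≤ (δ : ℤ) - 1 →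
    ∑ u : {x : K // x ^ (q + 1) = 1}, algebraMap F K (c u) * (u : K) ^ i = 0
  intro i h1 h2
  have hconv : (∑ u : {x : K // x ^ (q + 1) = 1}, algebraMap F K (c u) * (u : K) ^ i)
      = ∑ y ∈ nthRootsFinset (q + 1) (1 : K), algebraMap F K (cK y) * y ^ i := by
    rw [← sum_U_eq (Nat.succ_pos q) (fun y => algebraMap F K (cK y) * y ^ i)]
    exact Finset.sum_congr rfl fun u _ => by rw [hcKc ↑u u.2]
  rw [hconv]
  rcases le_or_gt 0 i with hi | hi
  · rw [abs_of_nonneg hi] at h1 h2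
    set j : ℕ := i.toNat with hj
    have hij : i = (j : ℤ) := (Int.toNat_of_nonneg hi).symm
    have hj1 : 1 ≤ j := by omega
    have hj2 : j ≤ δ - 1 := by omega
    have := h j hj1 hj2
    rw [hij]
    simpa [zpow_natCast] using this
  · rw [abs_of_neg hi] at h1 h2
    set j : ℕ := (-i).toNat with hj
    have hij : i = -(j : ℤ) := by omega
    have hj1 : 1 ≤ j := by omega
    have hj2 : j ≤ δ - 1 := by omega
    have hfix : ∀ a : F, (algebraMap F K a) ^ q = algebraMap F K a := fun a => by
      rw [← map_pow, ← hF, FiniteField.pow_card]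
    have hterm : ∀ y ∈ nthRootsFinset (q + 1) (1 : K),
        algebraMap F K (cK y) * y ^ i = (algebraMap F K (cK y) * y ^ j) ^ q := by
      intro y hy
      have hyr : y ^ (q + 1) = 1 := (Polynomial.mem_nthRootsFinset (Nat.succ_pos q) 1).mp hy
      rw [mul_pow, hfix, hij, zpow_neg_eq_pow_q hyr]
    rw [Finset.sum_congr rfl hterm]
    have hfr : (∑ y ∈ nthRootsFinset (q + 1) (1 : K), algebraMap F K (cK y) * y ^ j) ^ q
        = ∑ y ∈ nthRootsFinset (q + 1) (1 : K), (algebraMap F K (cK y) * y ^ j) ^ q := by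
      exact hq ▸ sum_pow_char_pow p n _ _
    rw [← hfr, h j hj1 hj2, zero_pow (by rw [hq]; exact (pow_pos hp.pos n).ne')]

lemma partB {F K : Type*} [Field F] [Fintype F] [Field K] [Fintype K] [Algebra F K]
    {p r m δ q : ℕ} (hp : p.Prime) (hr : 0 < r) (hm : 2 ≤ m) (hδ : δ = p ^ r) (hq : q = δ ^ m)
    (hF : Fintype.card F = q) (hK : Fintype.card K = q ^ 2) (hchar : CharP K p) :
    ∃ c : {x : K // x ^ (q + 1) = 1} → F,
      IsBCHWord q δ F K c ∧ c ≠ 0 ∧ hWeight c = δ + 1 := by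
  classical
  haveI := Fact.mk hp
  haveI := hchar
  have hδ2 : 2 ≤ δ := by
    rw [hδ]; exact le_trans hp.two_le (Nat.le_self_pow hr.ne' p)
  have hq2 : 2 ≤ q := by
    rw [hq]; exact le_trans hδ2 (Nat.le_self_pow (by omega) δ)
  have hδ1 : 0 < δ - 1 := by omega
  have hδK : (δ : K) = 0 := by
    rw [hδ]; push_cast; rw [CharP.cast_eq_zero K p]; exact zero_pow (by omega)
  have hq_eq : q = p ^ (r * m) := by rw [hq, hδ, ← pow_mul]
  -- primitive roots
  have hdvd1 : δ - 1 ∣ Fintype.card K - 1 := by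
    rw [hK, hq, ← pow_mul]
    simpa using Nat.sub_dvd_pow_sub_pow δ 1 (m * 2)
  obtain ⟨ζ, hζ⟩ := exists_primitiveRoot_of_dvd K hδ1 hdvd1
  have hqq : q * q = (q + 1) * (q - 1) + 1 := by
    zify [show 1 ≤ q by omega]; ring
  have hdvd2 : q + 1 ∣ Fintype.card K - 1 := by
    rw [hK, pow_two]
    exact ⟨q - 1, by omega⟩
  obtain ⟨ξ, hξ⟩ := exists_primitiveRoot_of_dvd K (by omega) hdvd2
  set R := Polynomial.nthRootsFinset (q + 1) (1 : K) with hR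
  have hcardR : R.card = q + 1 := hξ.card_nthRootsFinset
  -- choice of u₀
  have hnotsub : ¬ R ⊆ ({1, -1} : Finset K) := by
    intro hsub
    have h1 := Finset.card_le_card hsub
    have h2 : ({1, -1} : Finset K).card ≤ 2 :=
      le_trans (Finset.card_insert_le _ _) (by simp)
    omega
  obtain ⟨u₀, hu₀R, hu₀not⟩ := Finset.not_subset.mp hnotsub
  have hu₀1 : u₀ ^ (q + 1) = 1 := (Polynomial.mem_nthRootsFinset (by omega) 1).mp hu₀R
  have hu₀0 : u₀ ≠ 0 := by
    intro h; rw [h, zero_pow (Nat.succ_ne_zero q)] at hu₀1; exact one_ne_zero hu₀1.symm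
  set b := u₀ ^ q with hb
  have hub : u₀ * b = 1 := by
    rw [hb, ← pow_succ']
    exact hq ▸ hu₀1  -- q+1 exponent ; fix below if needed
  have hb0 : b ≠ 0 := by
    intro h; rw [h, mul_zero] at hub; exact zero_ne_one hub
  have hsq : u₀ * u₀ ≠ 1 := by
    intro h
    rcases mul_self_eq_one_iff.mp h with h1 | h1 <;> exact hu₀not (by simp [h1])
  have hbu : b ≠ u₀ := by
    intro h; rw [h] at hub; exact hsq hub
  have hfrobq : ∀ x y : K, (x + y) ^ q = x ^ q + y ^ q := fun x y => by
    rw [hq_eq]; exact add_pow_char_pow x y p (r * m)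
  have hfrobδ : ∀ x y : K, (x + y) ^ δ = x ^ δ + y ^ δ := fun x y => by
    rw [hδ]; exact add_pow_char_pow x y p r
  have hnegδ : ∀ x : K, (-x) ^ δ = -(x ^ δ) := fun x => by
    have := sub_pow_char_pow (R := K) (p := p) (n := r) (x := (0:K)) (y := x)
    rw [zero_sub, zero_pow (by rw [hδ] at hδ2; positivity), zero_sub] at this
    rw [hδ]; exact this
  have hfixq : ∀ x : K, x ^ δ = x → x ^ q = x := fun x hx => by
    rw [hq]; exact fix_pow_tower hx m
  set T0 : Finset K := insert (0 : K) (Polynomial.nthRootsFinset (δ - 1) (1 : K)) with hT0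
  have h0T : (0 : K) ∉ Polynomial.nthRootsFinset (δ - 1) (1 : K) := by
    intro h
    have := (Polynomial.mem_nthRootsFinset hδ1 1).mp h
    rw [zero_pow hδ1.ne'] at this
    exact one_ne_zero this.symm
  have hcardT0 : T0.card = δ := by
    rw [hT0, Finset.card_insert_of_notMem h0T, hζ.card_nthRootsFinset]
    omega
  have hT0fix : ∀ x ∈ T0, x ^ δ = x := by
    intro x hx
    rcases Finset.mem_insert.mp hx with rfl | hx'
    · exact zero_pow (by omega)
    · have h1 := (Polynomial.mem_nthRootsFinset hδ1 1).mp hx'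
      calc x ^ δ = x ^ (δ - 1) * x := by rw [← pow_succ]; congr 1; omega
      _ = x := by rw [h1, one_mul]
  have hT0q : ∀ x ∈ T0, x ^ q = x := fun x hx => hfixq x (hT0fix x hx)
  have hbq : b ^ q = u₀ := by
    rw [hb, ← pow_mul, hqq, pow_succ, pow_mul, hu₀1, one_pow, one_mul]
  have hxu₀ : ∀ x ∈ T0, x + u₀ ≠ 0 := by
    intro x hx h0
    have hxneg : u₀ = -x := by linear_combination h0
    have hnx : (-x) ^ δ = -x := by rw [hnegδ, hT0fix x hx]
    have hfix : u₀ ^ q = u₀ := by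
      rw [hxneg]; exact hfixq _ hnx
    apply hsq
    calc u₀ * u₀ = u₀ ^ q * u₀ := by rw [hfix]
    _ = u₀ ^ (q + 1) := (pow_succ u₀ q).symm
    _ = 1 := hu₀1
  have hxb : ∀ x ∈ T0, x + b ≠ 0 := by
    intro x hx h0
    have hxneg : b = -x := by linear_combination h0
    have hnx : (-x) ^ δ = -x := by rw [hnegδ, hT0fix x hx]
    have hfix : b ^ q = b := by rw [hxneg]; exact hfixq _ hnx
    rw [hbq] at hfix
    exact hbu hfix.symm
  have hwq1 : ∀ x ∈ T0, (x + u₀) ^ q = x + b := fun x hx => by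
    rw [hfrobq, hT0q x hx, hb]
  have hwq2 : ∀ x ∈ T0, (x + b) ^ q = x + u₀ := fun x hx => by
    rw [hfrobq, hT0q x hx, hbq]
  set v : K → K := fun x => (x + b) / (x + u₀) with hv
  have hvR : ∀ x ∈ T0, (v x) ^ (q + 1) = 1 := by
    intro x hx
    show ((x + b) / (x + u₀)) ^ (q + 1) = 1
    rw [div_pow, pow_succ, pow_succ, hwq2 x hx, hwq1 x hx, mul_comm (x + u₀) (x + b)]
    exact div_self (mul_ne_zero (hxb x hx) (hxu₀ x hx))
  have hvne1 : ∀ x ∈ T0, v x ≠ 1 := by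
    intro x hx h1
    have := (div_eq_one_iff_eq (hxu₀ x hx)).mp h1
    exact hbu (by linear_combination this)
  have hv0 : ∀ x ∈ T0, v x ≠ 0 :=
    fun x hx => div_ne_zero (hxb x hx) (hxu₀ x hx)
  have hvinj : ∀ x ∈ T0, ∀ y ∈ T0, v x = v y → x = y := by
    intro x hx y hy hxy
    have h1 : (x + b) * (y + u₀) = (y + b) * (x + u₀) := by
      rw [div_eq_div_iff (hxu₀ x hx) (hxu₀ y hy)] at hxy
      exact hxy
    have h2 : (x - y) * (u₀ - b) = 0 := by linear_combination h1
    rcases mul_eq_zero.mp h2 with h | h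
    · exact sub_eq_zero.mp h
    · exact absurd (sub_eq_zero.mp h).symm hbu
  set z : K → K := fun x => ((x + u₀) * (x + b)) ^ (δ - 1) with hz
  have hzne : ∀ x ∈ T0, z x ≠ 0 := fun x hx =>
    pow_ne_zero _ (mul_ne_zero (hxu₀ x hx) (hxb x hx))
  have hzfix : ∀ x ∈ T0, (z x) ^ q = z x := by
    intro x hx
    show (((x + u₀) * (x + b)) ^ (δ - 1)) ^ q = ((x + u₀) * (x + b)) ^ (δ - 1)
    rw [← pow_mul, mul_comm (δ - 1) q, pow_mul, mul_pow, hwq1 x hx, hwq2 x hx,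
      mul_comm (x + b) (x + u₀)]
  set γ : K → F := fun x => if h : ∃ a : F, algebraMap F K a = z x then h.choose else 0 with hγdef
  have hγ : ∀ x ∈ T0, algebraMap F K (γ x) = z x := by
    intro x hx
    have hex := fixed_mem_range hF hq2 (hzfix x hx)
    show algebraMap F K (if h : ∃ a : F, algebraMap F K a = z x then h.choose else 0) = z x
    rw [dif_pos hex]
    exact hex.choose_spec
  have hγ0 : ∀ x ∈ T0, γ x ≠ 0 := fun x hx h0 =>
    hzne x hx (by rw [← hγ x hx, h0, map_zero])
  set cK : K → F := fun y => if y = 1 then 1 else ∑ x ∈ T0.filter (fun x' => v x' = y), γ x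
    with hcKdef
  have hcKv : ∀ x ∈ T0, cK (v x) = γ x := by
    intro x hx
    show (if v x = 1 then 1 else ∑ x' ∈ T0.filter (fun x' => v x' = v x), γ x') = γ x
    rw [if_neg (hvne1 x hx)]
    have hfe : T0.filter (fun x' => v x' = v x) = {x} := by
      ext y
      simp only [Finset.mem_filter, Finset.mem_singleton]
      constructor
      · rintro ⟨hy, he⟩; exact hvinj y hy x hx he
      · rintro rfl; exact ⟨hx, rfl⟩
    rw [hfe, Finset.sum_singleton]
  have hcK1 : cK 1 = 1 := by
    show (if (1:K) = 1 then (1:F) else _) = 1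
    rw [if_pos rfl]
  have hcKzero : ∀ y : K, y ≠ 1 → (∀ x ∈ T0, v x ≠ y) → cK y = 0 := by
    intro y h1 h2
    show (if y = 1 then (1:F) else ∑ x ∈ T0.filter (fun x' => v x' = y), γ x) = 0
    rw [if_neg h1, Finset.filter_false_of_mem h2, Finset.sum_empty]
  set c : {x : K // x ^ (q + 1) = 1} → F := fun u => cK ↑u with hcdef
  have hone : ((1 : K)) ^ (q + 1) = 1 := one_pow _
  refine ⟨c, ?_, ?_, ?_⟩
  · -- IsBCHWord
    refine isBCHWord_of_nthRoots hp hq_eq hF hchar c cK (fun y hy => rfl) ?_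
    intro i hi1 hi2
    have h1R : (1 : K) ∈ R := (Polynomial.mem_nthRootsFinset (by omega) 1).mpr (one_pow _)
    have hvR' : ∀ x ∈ T0, v x ∈ R.erase 1 := fun x hx =>
      Finset.mem_erase.mpr ⟨hvne1 x hx,
        (Polynomial.mem_nthRootsFinset (by omega) 1).mpr (hvR x hx)⟩
    rw [← Finset.add_sum_erase _ _ h1R, hcK1, map_one, one_mul, one_pow]
    -- now : 1 + ∑_{y ∈ R.erase 1} ... = 0
    have hW : T0.image v ⊆ R.erase 1 := by
      intro y hy
      obtain ⟨x, hx, rfl⟩ := Finset.mem_image.mp hy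
      exact hvR' x hx
    have hrest : ∑ y ∈ R.erase 1, algebraMap F K (cK y) * y ^ i
        = ∑ y ∈ T0.image v, algebraMap F K (cK y) * y ^ i := by
      refine (Finset.sum_subset hW ?_).symm
      intro y hyR hyW
      have : cK y = 0 := by
        refine hcKzero y (Finset.mem_erase.mp hyR).1 fun x hx he => hyW ?_
        exact Finset.mem_image.mpr ⟨x, hx, he⟩
      rw [this, map_zero, zero_mul]
    have himg : ∑ y ∈ T0.image v, algebraMap F K (cK y) * y ^ i
        = ∑ x ∈ T0, algebraMap F K (cK (v x)) * (v x) ^ i := by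
      refine Finset.sum_image fun x hx y hy he => hvinj x hx y hy he
    set g : Polynomial K := (X + C (b ^ δ)) * (X + C u₀) ^ (δ - 1 - i) * (X + C b) ^ (i - 1)
      with hg
    have hmonic : g.Monic :=
      (((monic_X_add_C _).mul ((monic_X_add_C _).pow _)).mul ((monic_X_add_C _).pow _))
    have hdeg : g.natDegree = δ - 1 := by
      rw [hg, ((monic_X_add_C _).mul ((monic_X_add_C _).pow _)).natDegree_mul
          ((monic_X_add_C _).pow _),
        (monic_X_add_C _).natDegree_mul ((monic_X_add_C _).pow _)]
      rw [natDegree_X_add_C, Monic.natDegree_pow, Monic.natDegree_pow]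
      · rw [natDegree_X_add_C, natDegree_X_add_C]
        omega
      · exact monic_X_add_C _
      · exact monic_X_add_C _
    have hgx : ∀ x ∈ T0, algebraMap F K (cK (v x)) * (v x) ^ i = g.eval x := by
      intro x hx
      rw [hcKv x hx, hγ x hx]
      have hA : x + u₀ ≠ 0 := hxu₀ x hx
      have hB : x + b ≠ 0 := hxb x hx
      have step1 : z x * v x ^ i = (x + u₀) ^ (δ - 1 - i) * (x + b) ^ (δ - 1 + i) := by
        show ((x + u₀) * (x + b)) ^ (δ - 1) * ((x + b) / (x + u₀)) ^ i = _
        rw [div_pow, div_eq_mul_inv, mul_pow]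
        have hsplit : (x + u₀) ^ (δ - 1) = (x + u₀) ^ (δ - 1 - i) * (x + u₀) ^ i := by
          rw [← pow_add]; congr 1; omega
        have hBsum : (x + b) ^ (δ - 1) * (x + b) ^ i = (x + b) ^ (δ - 1 + i) := by
          rw [← pow_add]
        calc (x + u₀) ^ (δ - 1) * (x + b) ^ (δ - 1) * ((x + b) ^ i * ((x + u₀) ^ i)⁻¹)
            = ((x + u₀) ^ (δ - 1 - i) * (x + b) ^ (δ - 1 + i)) *
              ((x + u₀) ^ i * ((x + u₀) ^ i)⁻¹) := by rw [hsplit, ← hBsum]; ring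
          _ = (x + u₀) ^ (δ - 1 - i) * (x + b) ^ (δ - 1 + i) := by
              rw [mul_inv_cancel₀ (pow_ne_zero _ hA), mul_one]
      have step2 : (x + b) ^ (δ - 1 + i) = (x + b ^ δ) * (x + b) ^ (i - 1) := by
        have h1 : (x + b) ^ (δ - 1 + i) = (x + b) ^ δ * (x + b) ^ (i - 1) := by
          rw [← pow_add]; congr 1; omega
        rw [h1, hfrobδ, hT0fix x hx]
      rw [step1, step2, hg]
      simp only [eval_mul, eval_pow, eval_add, eval_X, eval_C]
      ring
    have hsumT0 : ∑ x ∈ T0, g.eval x = -1 := by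
      have hdeg' : g.natDegree < δ := by omega
      have heval : ∀ x : K, g.eval x = ∑ j ∈ Finset.range δ, g.coeff j * x ^ j :=
        fun x => g.eval_eq_sum_range' hdeg' x
      calc ∑ x ∈ T0, g.eval x
          = ∑ j ∈ Finset.range δ, g.coeff j * ∑ x ∈ T0, x ^ j := by
            rw [Finset.sum_congr rfl fun x _ => heval x, Finset.sum_comm]
            exact Finset.sum_congr rfl fun j _ => by rw [Finset.mul_sum]
        _ = ∑ j ∈ Finset.range δ, g.coeff j * (if j = δ - 1 then -1 else 0) := by
            refine Finset.sum_congr rfl fun j hj => ?_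
            rw [hT0, sum_pow_T0 hδ2 hδK hζ j (by have := Finset.mem_range.mp hj; omega)]
        _ = -1 := by
            rw [Finset.sum_eq_single (δ - 1)]
            · rw [if_pos rfl, ← hdeg, hmonic.coeff_natDegree]; ring
            · intro j _ hjne; rw [if_neg hjne, mul_zero]
            · intro habs; exact absurd (Finset.mem_range.mpr (by omega)) habs
    rw [hrest, himg, Finset.sum_congr rfl hgx, hsumT0]
    ring
  · -- c ≠ 0
    intro h0
    have := congrFun h0 ⟨1, hone⟩
    rw [hcdef] at this
    simp only [Pi.zero_apply] at this
    rw [hcK1] at this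
    exact one_ne_zero this
  · -- weight
    have hval : Subtype.val '' {u : {x : K // x ^ (q + 1) = 1} | c u ≠ 0}
        = ↑(insert (1 : K) (T0.image v)) := by
      ext y
      constructor
      · rintro ⟨u, hcu, rfl⟩
        simp only [Finset.coe_insert, Set.mem_insert_iff, Finset.coe_image, Set.mem_image]
        by_cases h1 : (u : K) = 1
        · exact Or.inl h1
        · right
          by_contra hno
          push_neg at hno
          refine hcu (hcKzero _ h1 fun x hx he => ?_)
          exact hno x hx he
      · intro hy
        simp only [Finset.coe_insert, Set.mem_insert_iff, Finset.coe_image,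
          Set.mem_image] at hy
        rcases hy with rfl | ⟨x, hx, rfl⟩
        · refine ⟨⟨1, hone⟩, ?_, rfl⟩
          show cK 1 ≠ 0
          rw [hcK1]; exact one_ne_zero
        · refine ⟨⟨v x, hvR x hx⟩, ?_, rfl⟩
          show cK (v x) ≠ 0
          rw [hcKv x hx]; exact hγ0 x hx
    have h1img : (1 : K) ∉ T0.image v := by
      intro h
      obtain ⟨x, hx, he⟩ := Finset.mem_image.mp h
      exact hvne1 x hx he
    have hcardimg : (T0.image v).card = δ := by
      rw [Finset.card_image_of_injOn fun x hx y hy he => hvinj x hx y hy he, hcardT0]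
    show {u : {x : K // x ^ (q + 1) = 1} | c u ≠ 0}.ncard = δ + 1
    rw [← Set.ncard_image_of_injective _ Subtype.val_injective, hval,
      Set.ncard_coe_finset, Finset.card_insert_of_notMem h1img, hcardimg]

theorem stmt_13 (p r m δ q : ℕ) (hp : p.Prime) (hr : 0 < r) (hm : 2 ≤ m)
    (hδ : δ = p ^ r) (hq : q = δ ^ m)
    (F K : Type*) [Field F] [Fintype F] [Field K] [Fintype K] [Algebra F K]
    (hF : Fintype.card F = q) (hK : Fintype.card K = q ^ 2) :
    (∀ c : {x : K // x ^ (q + 1) = 1} → F,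
        IsBCHWord q δ F K c → c ≠ 0 → δ + 1 ≤ hWeight c) ∧
      ∃ c : {x : K // x ^ (q + 1) = 1} → F,
        IsBCHWord q δ F K c ∧ c ≠ 0 ∧ hWeight c = δ + 1 := by
  classical
  have hδ2 : 2 ≤ δ := by
    rw [hδ]; exact le_trans hp.two_le (Nat.le_self_pow hr.ne' p)
  have hq2 : 2 ≤ q := by
    rw [hq]; exact le_trans hδ2 (Nat.le_self_pow (by omega) δ)
  have hq_eq : q = p ^ (r * m) := by rw [hq, hδ, ← pow_mul]
  have hcharK : CharP K p := charP_of_card hp (by positivity : 0 < r * m * 2)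
    (by rw [hK, hq_eq, ← pow_mul])
  have hcop : Nat.Coprime δ (q + 1) := by
    have hdvd : δ ∣ q := hq ▸ dvd_pow_self δ (by omega : m ≠ 0)
    obtain ⟨t, ht⟩ := hdvd
    rw [ht, add_comm (δ * t) 1]
    exact (Nat.coprime_add_mul_left_right δ 1 t).mpr (Nat.coprime_one_right δ)
  constructor
  · -- Part A : lower bound
    intro c hbch hc0
    letI instU : Fintype {x : K // x ^ (q + 1) = 1} := Fintype.ofFinite _
    set cK : K → F := fun y => if hy : y ^ (q + 1) = 1 then c ⟨y, hy⟩ else 0 with hcKdef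
    have hcKu : ∀ u : {x : K // x ^ (q + 1) = 1}, cK ↑u = c u := by
      intro u
      show (if hy : (u : K) ^ (q + 1) = 1 then c ⟨↑u, hy⟩ else 0) = c u
      rw [dif_pos u.2]
    have hbchR : ∀ i : ℤ, 1 ≤ |i| → |i| ≤ (δ : ℤ) - 1 →
        ∑ y ∈ Polynomial.nthRootsFinset (q + 1) (1 : K), algebraMap F K (cK y) * y ^ i = 0 := by
      intro i h1 h2
      have hb := hbch i h1 h2
      rw [← hb, ← sum_U_eq (Nat.succ_pos q) (fun y => algebraMap F K (cK y) * y ^ i)]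
      exact Finset.sum_congr rfl fun u _ => by rw [hcKu u]
    set S : Finset K := (Polynomial.nthRootsFinset (q + 1) (1 : K)).filter (fun y => cK y ≠ 0)
      with hSdef
    have hS0 : ∀ y ∈ S, y ^ (q + 1) = 1 := fun y hy =>
      (Polynomial.mem_nthRootsFinset (Nat.succ_pos q) 1).mp (Finset.mem_filter.mp hy).1
    have hy0 : ∀ y ∈ S, y ≠ 0 := by
      intro y hy h0
      have := hS0 y hy
      rw [h0, zero_pow (Nat.succ_ne_zero q)] at this
      exact one_ne_zero this.symm
    have hSne : S.Nonempty := by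
      obtain ⟨u, hu⟩ := Function.ne_iff.mp hc0
      refine ⟨↑u, Finset.mem_filter.mpr ⟨(Polynomial.mem_nthRootsFinset (Nat.succ_pos q) 1).mpr u.2, ?_⟩⟩
      rw [hcKu u]
      simpa using hu
    have ha : ∀ y ∈ S, algebraMap F K (cK y) ≠ 0 := by
      intro y hy h0
      exact (Finset.mem_filter.mp hy).2 ((_root_.map_eq_zero _).mp h0)
    have hrestrict : ∀ f : K → K, (∀ y, cK y = 0 → f y = 0) →
        ∑ y ∈ S, f y = ∑ y ∈ Polynomial.nthRootsFinset (q + 1) (1 : K), f y := by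
      intro f hf
      refine Finset.sum_filter_of_ne fun y _ hfy => ?_
      intro h0
      exact hfy (hf y h0)
    have hpos : ∀ k, k < δ - 1 →
        ∑ y ∈ S, (algebraMap F K (cK y) * y) * y ^ k = 0 := by
      intro k hk
      have habs : |((k : ℤ) + 1)| = (k : ℤ) + 1 := abs_of_nonneg (by positivity)
      have hb := hbchR ((k : ℤ) + 1) (by rw [habs]; omega) (by rw [habs]; push_cast; omega)
      have hzp : ∀ y : K, y ^ ((k : ℤ) + 1) = y ^ (k + 1) := by
        intro y
        rw [show ((k : ℤ) + 1) = ((k + 1 : ℕ) : ℤ) by push_cast; ring, zpow_natCast]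
      calc ∑ y ∈ S, (algebraMap F K (cK y) * y) * y ^ k
          = ∑ y ∈ S, algebraMap F K (cK y) * y ^ ((k : ℤ) + 1) := by
            refine Finset.sum_congr rfl fun y _ => ?_
            rw [hzp y, pow_succ]
            ring
        _ = ∑ y ∈ Polynomial.nthRootsFinset (q + 1) (1 : K),
              algebraMap F K (cK y) * y ^ ((k : ℤ) + 1) := by
            refine hrestrict _ fun y h0 => ?_
            rw [h0, map_zero, zero_mul]
        _ = 0 := hb
    have hneg : ∀ k, k < δ - 1 →
        ∑ y ∈ S, (algebraMap F K (cK y) * y⁻¹) * (y⁻¹) ^ k = 0 := by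
      intro k hk
      have habs : |(-((k : ℤ) + 1))| = (k : ℤ) + 1 := by
        rw [abs_neg]; exact abs_of_nonneg (by positivity)
      have hb := hbchR (-((k : ℤ) + 1)) (by rw [habs]; omega) (by rw [habs]; push_cast; omega)
      calc ∑ y ∈ S, (algebraMap F K (cK y) * y⁻¹) * (y⁻¹) ^ k
          = ∑ y ∈ S, algebraMap F K (cK y) * y ^ (-((k : ℤ) + 1)) := by
            refine Finset.sum_congr rfl fun y hy => ?_
            have h1 : (-((k : ℤ) + 1)) = -(((k + 1 : ℕ) : ℤ)) := by push_cast; ring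
            rw [h1, zpow_neg, zpow_natCast, ← inv_pow, pow_succ]
            ring
        _ = 0 := by
            rw [hrestrict _ fun y h0 => by rw [h0, map_zero, zero_mul]]
            exact hb
    have hval : Subtype.val '' {u : {x : K // x ^ (q + 1) = 1} | c u ≠ 0} = ↑S := by
      ext y
      constructor
      · rintro ⟨u, hcu, rfl⟩
        refine Finset.mem_coe.mpr (Finset.mem_filter.mpr
          ⟨(Polynomial.mem_nthRootsFinset (Nat.succ_pos q) 1).mpr u.2, ?_⟩)
        rw [hcKu u]
        exact hcu
      · intro hy
        have hy' := Finset.mem_filter.mp (Finset.mem_coe.mp hy)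
        have hyr : y ^ (q + 1) = 1 :=
          (Polynomial.mem_nthRootsFinset (Nat.succ_pos q) 1).mp hy'.1
        refine ⟨⟨y, hyr⟩, ?_, rfl⟩
        show c ⟨y, hyr⟩ ≠ 0
        rw [← hcKu ⟨y, hyr⟩] at *
        exact hy'.2
    have hwt : hWeight c = S.card := by
      show {u : {x : K // x ^ (q + 1) = 1} | c u ≠ 0}.ncard = S.card
      rw [← Set.ncard_image_of_injective _ Subtype.val_injective, hval,
        Set.ncard_coe_finset]
    rw [hwt]
    exact lower_bound_core hδ2 hcop S hS0 hSne _ ha hpos hneg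
  · exact partB hp hr hm hδ hq hF hK hcharK
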